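/- Let j ≥ 1, m > 1, γ₂^{(j)}(t) = exp((1/2)((2 ln t)^{1/m} + j)^m) for t ≥ e^{2^{m-1}}. Then γ₂^{(j)} is convex on [e^{2^{m-1}}, ∞) and satisfies 0 ≤ γ₂^{(j)}(t)·(γ₂^{(j)})''(t) / ((γ₂^{(j)})'(t))² ≤ 1 for all t ≥ e^{2^{m-1}}. -/

import Mathlib

open Real
set_option maxHeartbeats 1000000

/-- γ₂^{(j)}(t) = exp((1/2)((2 ln t)^{1/m} + j)^m). -/
noncomputable def gammaTwo (m : ℝ) (j : ℕ) (t : ℝ) : ℝ :=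
  Real.exp ((1 / 2) * ((2 * Real.log t) ^ (1 / m) + (j : ℝ)) ^ m)

namespace Gt2Aux

noncomputable def F (m : ℝ) (j : ℕ) (t : ℝ) : ℝ :=
  (1 / 2) * ((2 * Real.log t) ^ (1 / m) + (j : ℝ)) ^ m

noncomputable def Fd (m : ℝ) (j : ℕ) (t : ℝ) : ℝ :=
  ((2 * Real.log t) ^ (1 / m) + (j : ℝ)) ^ (m - 1) * (2 * Real.log t) ^ (1 / m - 1) / t

noncomputable def Fdd (m : ℝ) (j : ℕ) (t : ℝ) : ℝ :=
  ((2 * (m - 1) / m) * ((2 * Real.log t) ^ (1 / m) + (j : ℝ)) ^ (m - 2) * (2 * Real.log t) ^ (2 / m - 2)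
    + (2 * (1 - m) / m) * ((2 * Real.log t) ^ (1 / m) + (j : ℝ)) ^ (m - 1) * (2 * Real.log t) ^ (1 / m - 2)
    - ((2 * Real.log t) ^ (1 / m) + (j : ℝ)) ^ (m - 1) * (2 * Real.log t) ^ (1 / m - 1)) / t ^ 2

variable {m : ℝ} {j : ℕ} {t : ℝ}

lemma hasDerivAt_F (hm : 1 < m) (ht : 1 < t) : HasDerivAt (F m j) (Fd m j t) t := by
  have ht0 : (0:ℝ) < t := lt_trans one_pos ht
  have hL : 0 < Real.log t := Real.log_pos ht
  have h2L : 0 < 2 * Real.log t := by linarith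
  have hm0 : (0:ℝ) < m := by linarith
  have hlog : HasDerivAt (fun s : ℝ => 2 * Real.log s) (2 * t⁻¹) t :=
    (Real.hasDerivAt_log ht0.ne').const_mul 2
  have h1 : HasDerivAt (fun s : ℝ => (2 * Real.log s) ^ (1 / m))
      ((2 * t⁻¹) * (1 / m) * (2 * Real.log t) ^ (1 / m - 1)) t :=
    hlog.rpow_const (Or.inl h2L.ne')
  have h2 : HasDerivAt (fun s : ℝ => (2 * Real.log s) ^ (1 / m) + (j : ℝ))
      ((2 * t⁻¹) * (1 / m) * (2 * Real.log t) ^ (1 / m - 1)) t := h1.add_const _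
  have hgpos : 0 < (2 * Real.log t) ^ (1 / m) + (j : ℝ) := by
    have := Real.rpow_pos_of_pos h2L (1 / m)
    positivity
  have h3 := (h2.rpow_const (p := m) (Or.inl hgpos.ne')).const_mul (1/2 : ℝ)
  refine h3.congr_deriv ?_
  unfold Fd
  field_simp

lemma hasDerivAt_Fd (hm : 1 < m) (ht : 1 < t) : HasDerivAt (Fd m j) (Fdd m j t) t := by
  have ht0 : (0:ℝ) < t := lt_trans one_pos ht
  have hL : 0 < Real.log t := Real.log_pos ht
  have h2L : 0 < 2 * Real.log t := by linarith
  have hm0 : (0:ℝ) < m := by linarith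
  have hlog : HasDerivAt (fun s : ℝ => 2 * Real.log s) (2 * t⁻¹) t :=
    (Real.hasDerivAt_log ht0.ne').const_mul 2
  have h1 : HasDerivAt (fun s : ℝ => (2 * Real.log s) ^ (1 / m))
      ((2 * t⁻¹) * (1 / m) * (2 * Real.log t) ^ (1 / m - 1)) t :=
    hlog.rpow_const (Or.inl h2L.ne')
  have h2 : HasDerivAt (fun s : ℝ => (2 * Real.log s) ^ (1 / m) + (j : ℝ))
      ((2 * t⁻¹) * (1 / m) * (2 * Real.log t) ^ (1 / m - 1)) t := h1.add_const _
  have hgpos : 0 < (2 * Real.log t) ^ (1 / m) + (j : ℝ) := by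
    have := Real.rpow_pos_of_pos h2L (1 / m)
    positivity
  have hg1 : HasDerivAt (fun s : ℝ => ((2 * Real.log s) ^ (1 / m) + (j : ℝ)) ^ (m - 1))
      (((2 * t⁻¹) * (1 / m) * (2 * Real.log t) ^ (1 / m - 1)) * (m - 1) *
        ((2 * Real.log t) ^ (1 / m) + (j : ℝ)) ^ (m - 2)) t := by
    have := h2.rpow_const (p := m - 1) (Or.inl hgpos.ne')
    rwa [show m - 1 - 1 = m - 2 by ring] at this
  have hr : HasDerivAt (fun s : ℝ => (2 * Real.log s) ^ (1 / m - 1))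
      ((2 * t⁻¹) * (1 / m - 1) * (2 * Real.log t) ^ (1 / m - 2)) t := by
    have := hlog.rpow_const (p := 1 / m - 1) (Or.inl h2L.ne')
    rwa [show 1 / m - 1 - 1 = 1 / m - 2 by ring] at this
  have hN := hg1.mul hr
  have hdiv := hN.div (hasDerivAt_id t) ht0.ne'
  refine hdiv.congr_deriv ?_
  unfold Fdd
  have e1 : (2 * Real.log t) ^ (2 / m - 2)
      = (2 * Real.log t) ^ (1 / m - 1) * (2 * Real.log t) ^ (1 / m - 1) := by
    rw [← Real.rpow_add h2L]; ring_nf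
  rw [e1]
  simp only [id, Pi.mul_apply]
  field_simp


lemma key_ineqs (hm : 1 < m) (ht : Real.exp ((2 : ℝ) ^ (m - 1)) ≤ t) :
    0 < Fd m j t ∧ Fdd m j t ≤ 0 ∧ 0 ≤ Fdd m j t + (Fd m j t) ^ 2 := by
  have h2m : (1:ℝ) ≤ (2:ℝ) ^ (m - 1) := Real.one_le_rpow one_le_two (by linarith)
  have ht1 : (1:ℝ) < t := by
    have h := Real.add_one_le_exp ((2:ℝ) ^ (m-1))
    linarith
  have ht0 : (0:ℝ) < t := lt_trans one_pos ht1
  set L := Real.log t with hLdef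
  have hL1 : 1 ≤ L := by
    have : (2:ℝ) ^ (m-1) ≤ L := (Real.le_log_iff_exp_le ht0).2 ht
    linarith
  have h2L : 0 < 2 * L := by linarith
  have hm0 : (0:ℝ) < m := by linarith
  set H := (2 * L) ^ (1 / m) with hHdef
  have hH : 0 < H := Real.rpow_pos_of_pos h2L _
  have hg : 0 < H + (j:ℝ) := by positivity
  set Gm := (H + (j:ℝ)) ^ m with hGmdef
  have hGm : 0 < Gm := Real.rpow_pos_of_pos hg _
  clear_value L H Gm
  -- rpow identities
  have hk1 : H ^ m = 2 * L := by
    rw [hHdef, ← Real.rpow_mul h2L.le, one_div, inv_mul_cancel₀ hm0.ne', Real.rpow_one]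
  have hk2 : (2 * L) ^ (1 / m - 1) = H / (2 * L) := by
    rw [Real.rpow_sub h2L, Real.rpow_one, ← hHdef]
  have hk3 : (2 * L) ^ (1 / m - 2) = H / (2 * L) / (2 * L) := by
    rw [show 1/m - 2 = (1/m - 1) - 1 by ring, Real.rpow_sub h2L, Real.rpow_one, hk2]
  have hk4 : (2 * L) ^ (2 / m - 2) = (H / (2 * L)) * (H / (2 * L)) := by
    rw [show 2/m - 2 = (1/m - 1) + (1/m - 1) by ring, Real.rpow_add h2L, hk2]
  have hk6 : (H + (j:ℝ)) ^ (m - 1) = Gm / (H + (j:ℝ)) := by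
    rw [show m - 1 = m - (1:ℝ) by ring, Real.rpow_sub hg, Real.rpow_one, ← hGmdef]
  have hk5 : (H + (j:ℝ)) ^ (m - 2) = Gm / (H + (j:ℝ)) / (H + (j:ℝ)) := by
    rw [show m - 2 = (m - 1) - 1 by ring, Real.rpow_sub hg, Real.rpow_one, hk6]
  -- Bernoulli
  have hjH : (0:ℝ) ≤ (j:ℝ)/H := by positivity
  have b0 : 1 + m*((j:ℝ)/H) ≤ (1 + (j:ℝ)/H) ^ m :=
    one_add_mul_self_le_rpow_one_add (by linarith) hm.le
  have b1 : Gm = (2 * L) * (1 + (j:ℝ)/H) ^ m := by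
    rw [hGmdef, show H + (j:ℝ) = H * (1 + (j:ℝ)/H) by field_simp,
      Real.mul_rpow hH.le (by positivity), hk1]
  have bern : 2*L*H + 2*m*L*(j:ℝ) ≤ Gm * H := by
    calc 2*L*H + 2*m*L*(j:ℝ) = (2*L) * (1 + m*((j:ℝ)/H)) * H := by field_simp
      _ ≤ (2*L) * ((1 + (j:ℝ)/H) ^ m) * H := by gcongr
      _ = Gm * H := by rw [b1]
  -- rewrite Fd, Fdd
  have hFd : Fd m j t = Gm / (H + (j:ℝ)) * (H / (2*L)) / t := by
    unfold Fd; rw [← hLdef, ← hHdef, hk2, hk6]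
  have hFdd : Fdd m j t =
      (2*(m-1)*Gm*H^2 + 2*(1-m)*Gm*H*(H+(j:ℝ)) - 2*m*L*Gm*H*(H+(j:ℝ)))
        / (4*L^2*(H+(j:ℝ))^2*m*t^2) := by
    unfold Fdd; rw [← hLdef, ← hHdef, hk2, hk3, hk4, hk5, hk6]
    field_simp
    ring
  have hsum : Fdd m j t + (Fd m j t) ^ 2 =
      (2*(m-1)*Gm*H^2 + 2*(1-m)*Gm*H*(H+(j:ℝ)) - 2*m*L*Gm*H*(H+(j:ℝ)) + m*Gm^2*H^2)
        / (4*L^2*(H+(j:ℝ))^2*m*t^2) := by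
    rw [hFdd, hFd]
    field_simp
    ring
  have hL0 : (0:ℝ) < L := lt_of_lt_of_le one_pos hL1
  have hj0 : (0:ℝ) ≤ (j:ℝ) := Nat.cast_nonneg j
  refine ⟨?_, ?_, ?_⟩
  · rw [hFd]; positivity
  · rw [hFdd]
    apply div_nonpos_of_nonpos_of_nonneg _ (by positivity)
    nlinarith [mul_nonneg (mul_nonneg (mul_nonneg (sub_nonneg.2 hm.le) hGm.le) hH.le) hj0,
      mul_nonneg (mul_nonneg (mul_nonneg (mul_nonneg hm0.le hL0.le) hGm.le) hH.le) hH.le,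
      mul_nonneg (mul_nonneg (mul_nonneg (mul_nonneg hm0.le hL0.le) hGm.le) hH.le) hj0]
  · rw [hsum]
    apply div_nonneg _ (by positivity)
    have h1 : m*Gm*H*(2*L*H + 2*m*L*(j:ℝ)) ≤ m*Gm*H*(Gm*H) := by
      apply mul_le_mul_of_nonneg_left bern; positivity
    have h2 : 0 ≤ 2*(j:ℝ)*Gm*H*(m-1)*(m*L-1) := by
      have hmL : 0 ≤ m*L - 1 := by nlinarith
      have hm1 : 0 ≤ (m-1) := by linarith
      positivity
    nlinarith [h1, h2]


lemma gammaTwo_eq (m : ℝ) (j : ℕ) : gammaTwo m j = fun t => Real.exp (F m j t) := rfl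

lemma hasDerivAt_gamma (hm : 1 < m) (ht : 1 < t) :
    HasDerivAt (gammaTwo m j) (gammaTwo m j t * Fd m j t) t := by
  rw [gammaTwo_eq]
  exact (hasDerivAt_F hm ht).exp

lemma hasDerivAt_gamma' (hm : 1 < m) (ht : 1 < t) :
    HasDerivAt (fun s => gammaTwo m j s * Fd m j s)
      (gammaTwo m j t * Fd m j t * Fd m j t + gammaTwo m j t * Fdd m j t) t :=
  (hasDerivAt_gamma hm ht).mul (hasDerivAt_Fd hm ht)

lemma deriv_gamma (hm : 1 < m) (ht : 1 < t) :
    deriv (gammaTwo m j) t = gammaTwo m j t * Fd m j t :=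
  (hasDerivAt_gamma hm ht).deriv

lemma iteratedDeriv_two_gamma (hm : 1 < m) (ht : 1 < t) :
    iteratedDeriv 2 (gammaTwo m j) t
      = gammaTwo m j t * Fd m j t * Fd m j t + gammaTwo m j t * Fdd m j t := by
  rw [show (2:ℕ) = 1 + 1 by rfl, iteratedDeriv_succ, iteratedDeriv_one]
  have hev : deriv (gammaTwo m j) =ᶠ[nhds t] fun s => gammaTwo m j s * Fd m j s := by
    filter_upwards [isOpen_Ioi.mem_nhds (show t ∈ Set.Ioi (1:ℝ) from ht)] with s hs
    exact deriv_gamma hm hs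
  rw [hev.deriv_eq]
  exact (hasDerivAt_gamma' hm ht).deriv

end Gt2Aux

open Gt2Aux in
/-- For j ≥ 1 and m > 1, γ₂^{(j)} is convex on [e^{2^{m-1}}, ∞) and satisfies
0 ≤ γ₂^{(j)} (γ₂^{(j)})'' / ((γ₂^{(j)})')² ≤ 1 there. -/
theorem gammaTwo_convex (m : ℝ) (hm : 1 < m) (j : ℕ) (hj : 1 ≤ j) :
    ConvexOn ℝ (Set.Ici (Real.exp ((2 : ℝ) ^ (m - 1)))) (gammaTwo m j) ∧
      ∀ t : ℝ, Real.exp ((2 : ℝ) ^ (m - 1)) ≤ t →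
        0 ≤ gammaTwo m j t * iteratedDeriv 2 (gammaTwo m j) t / (deriv (gammaTwo m j) t) ^ 2 ∧
        gammaTwo m j t * iteratedDeriv 2 (gammaTwo m j) t / (deriv (gammaTwo m j) t) ^ 2 ≤ 1 := by
  have h2m : (1:ℝ) ≤ (2:ℝ) ^ (m - 1) := Real.one_le_rpow one_le_two (by linarith)
  have ht1 : ∀ t : ℝ, Real.exp ((2 : ℝ) ^ (m - 1)) ≤ t → 1 < t := by
    intro t ht
    have h := Real.add_one_le_exp ((2:ℝ) ^ (m-1))
    linarith
  constructor
  · apply convexOn_of_hasDerivWithinAt2_nonneg (convex_Ici _)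
      (f' := fun s => gammaTwo m j s * Fd m j s)
      (f'' := fun s => gammaTwo m j s * Fd m j s * Fd m j s + gammaTwo m j s * Fdd m j s)
    · intro x hx
      exact ((hasDerivAt_gamma hm (ht1 x hx)).continuousAt).continuousWithinAt
    · intro x hx
      rw [interior_Ici] at hx
      exact (hasDerivAt_gamma hm (ht1 x hx.le)).hasDerivWithinAt
    · intro x hx
      rw [interior_Ici] at hx
      exact (hasDerivAt_gamma' hm (ht1 x hx.le)).hasDerivWithinAt
    · intro x hx
      rw [interior_Ici] at hx
      obtain ⟨hFd, hFdd, hsum⟩ := key_ineqs (j := j) hm hx.le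
      have hγ : 0 < gammaTwo m j x := Real.exp_pos _
      nlinarith [hsum, hγ]
  · intro t ht
    obtain ⟨hFd, hFdd, hsum⟩ := key_ineqs (j := j) hm ht
    have hγ : 0 < gammaTwo m j t := Real.exp_pos _
    rw [deriv_gamma hm (ht1 t ht), iteratedDeriv_two_gamma hm (ht1 t ht)]
    have hratio : gammaTwo m j t *
        (gammaTwo m j t * Fd m j t * Fd m j t + gammaTwo m j t * Fdd m j t)
        / (gammaTwo m j t * Fd m j t) ^ 2
        = (Fdd m j t + (Fd m j t) ^ 2) / (Fd m j t) ^ 2 := by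
      field_simp
      ring
    rw [hratio]
    constructor
    · exact div_nonneg hsum (by positivity)
    · rw [div_le_one (by positivity)]
      nlinarith [hFdd]
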